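/- Let c : [0,∞) → [0,1] be measurable, let τ : [0,∞) → [0,∞) be measurable and essentially bounded, and let g ∈ L¹([0,∞)) be nonnegative. Then there exists a unique family (v_t)_{t≥0} of nonnegative functions in L¹([0,∞)) such that for every t ≥ 0: v_t(a) = c(t−a)·∫₀^∞ v_{t−a}(s) τ(s) ds for Lebesgue-a.e. a ∈ [0,t), and v_t(a) = g(a−t) for Lebesgue-a.e. a ≥ t (uniqueness meaning equality in L¹([0,∞)) for every t). -/

import Mathlib

open MeasureTheory Set Filter

/-- `v = (v_t)_{t ≥ 0}` is a (mild, method-of-characteristics) solution of the linear,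
time-inhomogeneous McKendrick–von Foerster renewal equation with thinning function `c`,
birth intensity `τ` and initial condition `g`: each `v_t` is nonnegative and in
`L¹([0,∞))`, `v_t(a) = c(t-a)·∫₀^∞ v_{t-a}(s) τ(s) ds` for a.e. `a ∈ [0,t)`, and
`v_t(a) = g(a-t)` for a.e. `a ≥ t`. -/
def IsLinearRenewalSolution (τ c g : ℝ → ℝ) (v : ℝ → ℝ → ℝ) : Prop :=
  ∀ t ≥ (0 : ℝ),
    Integrable (v t) (volume.restrict (Ici 0)) ∧
    (∀ᵐ a ∂(volume.restrict (Ici (0 : ℝ))), 0 ≤ v t a) ∧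
    (∀ᵐ a ∂(volume.restrict (Ico (0 : ℝ) t)),
      v t a = c (t - a) * ∫ z in Ici (0 : ℝ), v (t - a) z * τ z) ∧
    (∀ᵐ a ∂(volume.restrict (Ici t)), v t a = g (a - t))

/-! ### Transport helpers along measure-preserving equivalences -/

lemma map_restrict_preimage (e : ℝ ≃ᵐ ℝ) (hmap : Measure.map e volume = volume) (S : Set ℝ) :
    Measure.map e (volume.restrict (e ⁻¹' S)) = volume.restrict S := by
  rw [← MeasurableEquiv.restrict_map, hmap]

lemma ae_comp_equiv (e : ℝ ≃ᵐ ℝ) (hmap : Measure.map e volume = volume) (S : Set ℝ)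
    {P : ℝ → Prop} (h : ∀ᵐ x ∂volume.restrict S, P x) :
    ∀ᵐ y ∂volume.restrict (e ⁻¹' S), P (e y) := by
  rw [← map_restrict_preimage e hmap S] at h
  exact e.measurableEmbedding.ae_map_iff.mp h

lemma integrableOn_comp_equiv (e : ℝ ≃ᵐ ℝ) (hmap : Measure.map e volume = volume) (S : Set ℝ)
    {f : ℝ → ℝ} (h : IntegrableOn f S) :
    IntegrableOn (fun y => f (e y)) (e ⁻¹' S) := by
  rw [IntegrableOn, ← map_restrict_preimage e hmap S] at h
  exact e.measurableEmbedding.integrable_map_iff.mp h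

lemma setIntegral_comp_equiv (e : ℝ ≃ᵐ ℝ) (hmap : Measure.map e volume = volume) (S : Set ℝ)
    (f : ℝ → ℝ) : ∫ x in S, f x = ∫ y in e ⁻¹' S, f (e y) := by
  rw [← map_restrict_preimage e hmap S, e.measurableEmbedding.integral_map]

lemma map_addRight (s : ℝ) : Measure.map (⇑(MeasurableEquiv.addRight s)) volume = volume :=
  (measurePreserving_add_right volume s).map_eq
lemma map_subRight (s : ℝ) : Measure.map (⇑(MeasurableEquiv.subRight s)) volume = volume :=
  (measurePreserving_sub_right volume s).map_eq
lemma map_subLeft (s : ℝ) : Measure.map (⇑(MeasurableEquiv.subLeft s)) volume = volume :=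
  (Measure.measurePreserving_sub_left volume s).map_eq

lemma coe_addRight (s : ℝ) : ⇑(MeasurableEquiv.addRight s) = fun x : ℝ => x + s := rfl
lemma coe_subRight (s : ℝ) : ⇑(MeasurableEquiv.subRight s) = fun x : ℝ => x - s := rfl
lemma coe_subLeft (s : ℝ) : ⇑(MeasurableEquiv.subLeft s) = fun x : ℝ => s - x := rfl

lemma pre_addRight_Ici (s : ℝ) : ⇑(MeasurableEquiv.addRight s) ⁻¹' Ici s = Ici 0 := by
  rw [coe_addRight]; ext x; simp
lemma pre_subRight_Ici (s : ℝ) : ⇑(MeasurableEquiv.subRight s) ⁻¹' Ici 0 = Ici s := by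
  rw [coe_subRight]; ext x; simp [sub_nonneg]
lemma pre_subLeft_Ico (s : ℝ) : ⇑(MeasurableEquiv.subLeft s) ⁻¹' Ico 0 s = Ioc 0 s := by
  rw [coe_subLeft]; ext x
  simp only [mem_preimage, mem_Ico, mem_Ioc]
  constructor <;> rintro ⟨h1, h2⟩ <;> constructor <;> linarith
lemma pre_subLeft_Ioc (s : ℝ) : ⇑(MeasurableEquiv.subLeft s) ⁻¹' Ioc 0 s = Ico 0 s := by
  rw [coe_subLeft]; ext x
  simp only [mem_preimage, mem_Ico, mem_Ioc]
  constructor <;> rintro ⟨h1, h2⟩ <;> constructor <;> linarith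

lemma ae_union_split {t : ℝ} (ht : 0 ≤ t) {P : ℝ → Prop}
    (h1 : ∀ᵐ a ∂volume.restrict (Ico 0 t), P a)
    (h2 : ∀ᵐ a ∂volume.restrict (Ici t), P a) :
    ∀ᵐ a ∂volume.restrict (Ici (0:ℝ)), P a := by
  rw [← Ico_union_Ici_eq_Ici ht,
    Measure.restrict_union (by simp [Set.disjoint_left]) measurableSet_Ici]
  rw [ae_add_measure_iff]
  exact ⟨h1, h2⟩

/-! ### The Picard series for the renewal (Volterra) equation -/

noncomputable def Gfun (τ g : ℝ → ℝ) (t : ℝ) : ℝ := ∫ x in Ici (0:ℝ), g x * τ (x + t)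

noncomputable def bseq (c τ g : ℝ → ℝ) : ℕ → ℝ → ℝ
  | 0 => Gfun τ g
  | n + 1 => fun t => ∫ u in Ioc (0:ℝ) t, c u * bseq c τ g n u * τ (t - u)

lemma bseq_succ (c τ g : ℝ → ℝ) (n : ℕ) (t : ℝ) :
    bseq c τ g (n + 1) t = ∫ u in Ioc (0:ℝ) t, c u * bseq c τ g n u * τ (t - u) := rfl

noncomputable def bfun (c τ g : ℝ → ℝ) (t : ℝ) : ℝ := ∑' n, bseq c τ g n t

noncomputable def vfun (c τ g : ℝ → ℝ) (t a : ℝ) : ℝ :=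
  if a < t then c (t - a) * bfun c τ g (t - a) else g (a - t)

section Existence

variable {c τ g : ℝ → ℝ} {B : ℝ}
variable (hc : Measurable c) (hc01 : ∀ x, c x ∈ Icc (0:ℝ) 1)
variable (hτ : Measurable τ) (hτ0 : ∀ x, 0 ≤ τ x)
variable (hB : ∀ᵐ a ∂(volume.restrict (Ici (0:ℝ))), τ a ≤ B) (hB1 : 1 ≤ B)
variable (hgm : Measurable g) (hgi : Integrable g (volume.restrict (Ici 0)))
variable (hg0 : ∀ᵐ a ∂(volume.restrict (Ici (0:ℝ))), 0 ≤ g a)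

include hB in
lemma tau_shift_bound {t : ℝ} (ht : 0 ≤ t) :
    ∀ᵐ x ∂volume.restrict (Ici (0:ℝ)), τ (x + t) ≤ B := by
  have h1 : ∀ᵐ z ∂volume.restrict (Ici t), τ z ≤ B :=
    ae_restrict_of_ae_restrict_of_subset (Ici_subset_Ici.2 ht) hB
  have h2 := ae_comp_equiv (MeasurableEquiv.addRight t) (map_addRight t) (Ici t) h1
  rwa [pre_addRight_Ici] at h2

include hB in
lemma tau_refl_bound {t : ℝ} (ht : 0 ≤ t) :
    ∀ᵐ u ∂volume.restrict (Ioc (0:ℝ) t), τ (t - u) ≤ B := by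
  have h1 : ∀ᵐ z ∂volume.restrict (Ico (0:ℝ) t), τ z ≤ B :=
    ae_restrict_of_ae_restrict_of_subset (fun x hx => hx.1) hB
  have h2 := ae_comp_equiv (MeasurableEquiv.subLeft t) (map_subLeft t) (Ico 0 t) h1
  rwa [pre_subLeft_Ico] at h2

include hτ hgm in
lemma Gfun_meas : Measurable (Gfun τ g) := by
  have h : StronglyMeasurable fun p : ℝ × ℝ => g p.2 * τ (p.2 + p.1) :=
    ((hgm.comp measurable_snd).mul
      (hτ.comp (measurable_snd.add measurable_fst))).stronglyMeasurable
  exact h.integral_prod_right'.measurable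

include hc hτ hgm in
lemma bseq_meas : ∀ n, Measurable (bseq c τ g n)
  | 0 => Gfun_meas hτ hgm
  | n + 1 => by
    have hm := bseq_meas n
    have hset : MeasurableSet {p : ℝ × ℝ | 0 < p.2 ∧ p.2 ≤ p.1} :=
      (measurableSet_lt measurable_const measurable_snd).inter
        (measurableSet_le measurable_snd measurable_fst)
    have h : Measurable fun p : ℝ × ℝ =>
        if 0 < p.2 ∧ p.2 ≤ p.1 then c p.2 * bseq c τ g n p.2 * τ (p.1 - p.2) else 0 := by
      refine Measurable.ite hset ?_ measurable_const
      exact ((hc.comp measurable_snd).mul (hm.comp measurable_snd)).mul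
        (hτ.comp (measurable_fst.sub measurable_snd))
    have heq : bseq c τ g (n + 1) = fun t =>
        ∫ y, (fun p : ℝ × ℝ => if 0 < p.2 ∧ p.2 ≤ p.1 then
          c p.2 * bseq c τ g n p.2 * τ (p.1 - p.2) else 0) (t, y) := by
      funext t
      rw [bseq_succ, ← integral_indicator measurableSet_Ioc]
      congr 1
      funext y
      simp only [indicator_apply, mem_Ioc]
    rw [heq]
    exact h.stronglyMeasurable.integral_prod_right'.measurable

include hc01 hτ0 hg0 in
lemma bseq_nonneg : ∀ n t, 0 ≤ bseq c τ g n t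
  | 0, t => by
    refine integral_nonneg_of_ae ?_
    filter_upwards [hg0] with x hx
    exact mul_nonneg hx (hτ0 _)
  | n + 1, t => by
    refine integral_nonneg fun u => ?_
    exact mul_nonneg (mul_nonneg (hc01 u).1 (bseq_nonneg n u)) (hτ0 _)

include hτ hτ0 hB hgi hg0 in
lemma Gfun_le {t : ℝ} (ht : 0 ≤ t) : Gfun τ g t ≤ B * ∫ x in Ici (0:ℝ), g x := by
  have hmeas : AEStronglyMeasurable (fun x => τ (x + t))
      (volume.restrict (Ici (0:ℝ))) :=
    (hτ.comp (measurable_id.add_const t)).aestronglyMeasurable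
  have hbd : ∀ᵐ x ∂volume.restrict (Ici (0:ℝ)), ‖τ (x + t)‖ ≤ B := by
    filter_upwards [tau_shift_bound hB ht] with x hx
    rwa [Real.norm_of_nonneg (hτ0 _)]
  have hi1 : Integrable (fun x => g x * τ (x + t)) (volume.restrict (Ici 0)) := by
    have := hgi.bdd_mul hmeas hbd
    exact this.congr (Eventually.of_forall fun x => mul_comm _ _)
  calc Gfun τ g t ≤ ∫ x in Ici (0:ℝ), g x * B := by
        refine integral_mono_ae hi1 (hgi.mul_const B) ?_
        filter_upwards [hg0, tau_shift_bound hB ht] with x h1 h2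
        exact mul_le_mul_of_nonneg_left h2 h1
    _ = B * ∫ x in Ici (0:ℝ), g x := by rw [integral_mul_const, mul_comm]

include hc hc01 hτ hτ0 hB hB1 hgm hgi hg0 in
lemma bseq_integrand_int (n : ℕ) {t : ℝ} (ht : 0 ≤ t)
    (hle : ∀ u, 0 ≤ u → u ≤ t → bseq c τ g n u ≤ (B * ∫ x in Ici (0:ℝ), g x) * (B*t)^n / n.factorial) :
    Integrable (fun u => c u * bseq c τ g n u * τ (t - u))
      (volume.restrict (Ioc (0:ℝ) t)) := by
  set C := B * ∫ x in Ici (0:ℝ), g x with hC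
  have hC0 : 0 ≤ C := mul_nonneg (by linarith) (integral_nonneg_of_ae hg0)
  refine Integrable.mono' (g := fun _ => C * (B*t)^n / n.factorial * B)
    (integrableOn_const measure_Ioc_lt_top.ne) ?_ ?_
  · exact ((hc.mul (bseq_meas hc hτ hgm n)).mul
      (hτ.comp (measurable_const.sub measurable_id))).aestronglyMeasurable
  · filter_upwards [tau_refl_bound hB ht, ae_restrict_mem measurableSet_Ioc] with u hτu hu
    have h0 : 0 ≤ bseq c τ g n u := bseq_nonneg hc01 hτ0 hg0 n u
    have h2 : bseq c τ g n u ≤ C * (B*t)^n / n.factorial := hle u hu.1.le hu.2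
    rw [Real.norm_of_nonneg (mul_nonneg (mul_nonneg (hc01 u).1 h0) (hτ0 _))]
    calc c u * bseq c τ g n u * τ (t - u)
        ≤ 1 * (C * (B*t)^n / n.factorial) * B := by
          have hB0 : (0:ℝ) ≤ B := by linarith
          refine mul_le_mul (mul_le_mul (hc01 u).2 h2 h0 zero_le_one) hτu (hτ0 _) ?_
          rw [one_mul]
          exact div_nonneg (mul_nonneg hC0 (pow_nonneg (mul_nonneg hB0 ht) n))
            (Nat.cast_nonneg _)
      _ = C * (B*t)^n / n.factorial * B := by ring

include hc hc01 hτ hτ0 hB hB1 hgm hgi hg0 in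
lemma bseq_le : ∀ n, ∀ t : ℝ, 0 ≤ t →
    bseq c τ g n t ≤ (B * ∫ x in Ici (0:ℝ), g x) * (B*t)^n / n.factorial
  | 0, t, ht => by
    simpa [bseq] using Gfun_le hτ hτ0 hB hgi hg0 ht
  | n + 1, t, ht => by
    set C := B * ∫ x in Ici (0:ℝ), g x with hC
    have hC0 : 0 ≤ C := mul_nonneg (by linarith) (integral_nonneg_of_ae hg0)
    have hB0 : (0:ℝ) ≤ B := by linarith
    have IH := bseq_le n
    have hint := bseq_integrand_int hc hc01 hτ hτ0 hB hB1 hgm hgi hg0 n ht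
      (fun u hu1 hu2 => (IH u hu1).trans (by gcongr))
    have hint2 : Integrable (fun u : ℝ => C * B^(n+1) / n.factorial * u^n)
        (volume.restrict (Ioc (0:ℝ) t)) :=
      Integrable.const_mul (((continuous_pow n).integrableOn_Ioc : IntegrableOn (fun u : ℝ => u^n) (Ioc 0 t))) _
    have hmono : bseq c τ g (n+1) t
        ≤ ∫ u in Ioc (0:ℝ) t, C * B^(n+1) / n.factorial * u^n := by
      rw [bseq_succ]
      refine integral_mono_ae hint hint2 ?_
      filter_upwards [tau_refl_bound hB ht, ae_restrict_mem measurableSet_Ioc] with u hτu hu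
      have h0 : 0 ≤ bseq c τ g n u := bseq_nonneg hc01 hτ0 hg0 n u
      have h2 : bseq c τ g n u ≤ C * (B*u)^n / n.factorial := IH u hu.1.le
      calc c u * bseq c τ g n u * τ (t - u)
          ≤ 1 * (C * (B*u)^n / n.factorial) * B := by
            refine mul_le_mul (mul_le_mul (hc01 u).2 h2 h0 zero_le_one) hτu (hτ0 _) ?_
            rw [one_mul]
            exact div_nonneg (mul_nonneg hC0 (pow_nonneg (mul_nonneg hB0 hu.1.le) n))
              (Nat.cast_nonneg _)
        _ = C * B^(n+1) / n.factorial * u^n := by rw [mul_pow]; ring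
    refine hmono.trans ?_
    rw [MeasureTheory.integral_const_mul, ← intervalIntegral.integral_of_le ht, integral_pow]
    have hfac : ((n+1).factorial : ℝ) = (n+1) * n.factorial := by
      rw [Nat.factorial_succ]; push_cast; ring
    have hnfac : (n.factorial : ℝ) ≠ 0 := Nat.cast_ne_zero.2 n.factorial_ne_zero
    have hn1 : ((n:ℝ) + 1) ≠ 0 := by positivity
    refine le_of_eq ?_
    rw [zero_pow (Nat.succ_ne_zero n), mul_pow, hfac]
    field_simp
    ring

include hc hc01 hτ hτ0 hB hB1 hgm hgi hg0 in
lemma bseq_summable (t : ℝ) : Summable fun n => bseq c τ g n t := by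
  rcases le_or_gt 0 t with ht | ht
  · have hs : Summable fun n : ℕ => (B * ∫ x in Ici (0:ℝ), g x) * ((B*t)^n / n.factorial) :=
      (Real.summable_pow_div_factorial (B*t)).mul_left _
    refine Summable.of_nonneg_of_le (fun n => bseq_nonneg hc01 hτ0 hg0 n t)
      (fun n => ?_) hs
    simpa [mul_div_assoc] using bseq_le hc hc01 hτ hτ0 hB hB1 hgm hgi hg0 n t ht
  · refine summable_of_ne_finset_zero (s := {0}) ?_
    intro n hn
    match n, hn with
    | n + 1, _ =>
      rw [bseq_succ, Ioc_eq_empty (by intro h; exact absurd (h.trans ht) (lt_irrefl 0)),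
        Measure.restrict_empty, integral_zero_measure]

include hc01 hτ0 hg0 in
lemma bfun_nonneg (t : ℝ) : 0 ≤ bfun c τ g t :=
  tsum_nonneg fun n => bseq_nonneg hc01 hτ0 hg0 n t

include hc hc01 hτ hτ0 hB hB1 hgm hgi hg0 in
lemma bfun_meas : Measurable (bfun c τ g) := by
  have htend : ∀ t, Tendsto (fun N => ∑ n ∈ Finset.range N, bseq c τ g n t) atTop
      (nhds (bfun c τ g t)) := fun t =>
    (bseq_summable hc hc01 hτ hτ0 hB hB1 hgm hgi hg0 t).hasSum.tendsto_sum_nat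
  exact measurable_of_tendsto_metrizable
    (fun N => Finset.measurable_sum _ (fun n _ => bseq_meas hc hτ hgm n))
    (tendsto_pi_nhds.2 htend)

include hc hc01 hτ hτ0 hB hB1 hgm hgi hg0 in
lemma bfun_le {t T : ℝ} (ht : 0 ≤ t) (htT : t ≤ T) :
    bfun c τ g t ≤ ∑' n, (B * ∫ x in Ici (0:ℝ), g x) * ((B*T)^n / n.factorial) := by
  have hB0 : (0:ℝ) ≤ B := by linarith
  have hC0 : (0:ℝ) ≤ B * ∫ x in Ici (0:ℝ), g x :=
    mul_nonneg hB0 (integral_nonneg_of_ae hg0)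
  refine Summable.tsum_le_tsum (fun n => ?_) (bseq_summable hc hc01 hτ hτ0 hB hB1 hgm hgi hg0 t)
    ((Real.summable_pow_div_factorial (B*T)).mul_left _)
  calc bseq c τ g n t ≤ (B * ∫ x in Ici (0:ℝ), g x) * (B*t)^n / n.factorial :=
        bseq_le hc hc01 hτ hτ0 hB hB1 hgm hgi hg0 n t ht
    _ ≤ (B * ∫ x in Ici (0:ℝ), g x) * ((B*T)^n / n.factorial) := by
        rw [← mul_div_assoc]
        gcongr

include hc hc01 hτ hτ0 hB hB1 hgm hgi hg0 in
lemma bfun_volterra {t : ℝ} (ht : 0 ≤ t) :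
    bfun c τ g t = Gfun τ g t + ∫ u in Ioc (0:ℝ) t, c u * bfun c τ g u * τ (t - u) := by
  set C := B * ∫ x in Ici (0:ℝ), g x with hC
  have hC0 : 0 ≤ C := mul_nonneg (by linarith) (integral_nonneg_of_ae hg0)
  have hB0 : (0:ℝ) ≤ B := by linarith
  have hint : ∀ n, Integrable (fun u => c u * bseq c τ g n u * τ (t - u))
      (volume.restrict (Ioc (0:ℝ) t)) := fun n =>
    bseq_integrand_int hc hc01 hτ hτ0 hB hB1 hgm hgi hg0 n ht
      (fun u hu1 hu2 => (bseq_le hc hc01 hτ hτ0 hB hB1 hgm hgi hg0 n u hu1).trans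
        (by gcongr))
  have hnn : ∀ n u, 0 ≤ c u * bseq c τ g n u * τ (t - u) := fun n u =>
    mul_nonneg (mul_nonneg (hc01 u).1 (bseq_nonneg hc01 hτ0 hg0 n u)) (hτ0 _)
  have hkey : ∫ u in Ioc (0:ℝ) t, c u * bfun c τ g u * τ (t - u)
      = ∑' n, bseq c τ g (n+1) t := by
    have h1 : (fun u => c u * bfun c τ g u * τ (t - u))
        = fun u => ∑' n, c u * bseq c τ g n u * τ (t - u) := by
      funext u
      rw [bfun]
      rw [show (∑' n, c u * bseq c τ g n u * τ (t - u))
          = (∑' n, c u * bseq c τ g n u) * τ (t - u) from tsum_mul_right,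
        show (∑' n, c u * bseq c τ g n u) = c u * ∑' n, bseq c τ g n u from tsum_mul_left]
    rw [h1]
    have hfin : (∑' n, ∫⁻ u, ‖c u * bseq c τ g n u * τ (t - u)‖₊
        ∂(volume.restrict (Ioc (0:ℝ) t))) ≠ ⊤ := by
      have heach : ∀ n, ∫⁻ u, ‖c u * bseq c τ g n u * τ (t - u)‖₊
          ∂(volume.restrict (Ioc (0:ℝ) t))
          ≤ ENNReal.ofReal (C * (B*t)^(n+1) / (n+1).factorial) := by
        intro n
        show ∫⁻ u, ‖c u * bseq c τ g n u * τ (t - u)‖ₑ ∂(volume.restrict (Ioc (0:ℝ) t)) ≤ _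
        rw [← ofReal_integral_norm_eq_lintegral_enorm (hint n)]
        refine ENNReal.ofReal_le_ofReal ?_
        have : ∫ u in Ioc (0:ℝ) t, ‖c u * bseq c τ g n u * τ (t - u)‖
            = bseq c τ g (n+1) t := by
          rw [bseq_succ]
          refine integral_congr_ae (Eventually.of_forall fun u => ?_)
          exact Real.norm_of_nonneg (hnn n u)
        rw [this]
        exact bseq_le hc hc01 hτ hτ0 hB hB1 hgm hgi hg0 (n+1) t ht
      have hsum : Summable fun n : ℕ => C * (B*t)^(n+1) / (n+1).factorial := by
        have := ((Real.summable_pow_div_factorial (B*t)).mul_left C).comp_injective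
          Nat.succ_injective
        simpa [Function.comp_def, mul_div_assoc] using this
      refine ne_of_lt (lt_of_le_of_lt (ENNReal.tsum_le_tsum heach) ?_)
      rw [← ENNReal.ofReal_tsum_of_nonneg (fun n => by positivity) hsum]
      exact ENNReal.ofReal_lt_top
    rw [integral_tsum (fun n => (hint n).aestronglyMeasurable) hfin]
    exact tsum_congr fun n => (bseq_succ c τ g n t).symm
  rw [hkey]
  have := Summable.tsum_eq_zero_add (bseq_summable hc hc01 hτ hτ0 hB hB1 hgm hgi hg0 t)
  rw [bfun, this]
  rfl

include hc hc01 hτ hτ0 hB hB1 hgm hgi hg0 in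
lemma vfun_meas_a (t : ℝ) : Measurable (vfun c τ g t) := by
  refine Measurable.ite (measurableSet_lt measurable_id measurable_const) ?_ ?_
  · exact (hc.comp (measurable_const.sub measurable_id)).mul
      ((bfun_meas hc hc01 hτ hτ0 hB hB1 hgm hgi hg0).comp
        (measurable_const.sub measurable_id))
  · exact hgm.comp (measurable_id.sub_const t)

include hc hc01 hτ hτ0 hB hB1 hgm hgi hg0 in
lemma vfun_int_Ico {s : ℝ} (hs : 0 ≤ s) : IntegrableOn (vfun c τ g s) (Ico 0 s) := by
  set K : ℝ := ∑' n, (B * ∫ x in Ici (0:ℝ), g x) * ((B*s)^n / n.factorial) with hK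
  have hconst : IntegrableOn (fun _ : ℝ => K) (Ico 0 s) :=
    integrableOn_const measure_Ico_lt_top.ne
  refine Integrable.mono' hconst
    ((vfun_meas_a hc hc01 hτ hτ0 hB hB1 hgm hgi hg0 s).aestronglyMeasurable) ?_
  filter_upwards [ae_restrict_mem measurableSet_Ico] with z hz
  have h2 : 0 ≤ s - z := by linarith [hz.2.le]
  have h3 : s - z ≤ s := by linarith [hz.1]
  have hb : bfun c τ g (s - z) ≤ K := bfun_le hc hc01 hτ hτ0 hB hB1 hgm hgi hg0 h2 h3
  have hbn := bfun_nonneg hc01 hτ0 hg0 (s - z)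
  simp only [vfun, if_pos hz.2]
  rw [Real.norm_of_nonneg (mul_nonneg (hc01 _).1 hbn)]
  calc c (s - z) * bfun c τ g (s - z) ≤ 1 * K := mul_le_mul (hc01 _).2 hb hbn zero_le_one
    _ = K := one_mul K

include hc hc01 hτ hτ0 hB hB1 hgm hgi hg0 in
lemma vfun_tau_int_Ico {s : ℝ} (hs : 0 ≤ s) :
    IntegrableOn (fun z => vfun c τ g s z * τ z) (Ico 0 s) := by
  have hbd : ∀ᵐ z ∂volume.restrict (Ico (0:ℝ) s), ‖τ z‖ ≤ B := by
    filter_upwards [ae_restrict_of_ae_restrict_of_subset (fun x hx => hx.1) hB] with z hz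
    rwa [Real.norm_of_nonneg (hτ0 _)]
  have h1 := (vfun_int_Ico hc hc01 hτ hτ0 hB hB1 hgm hgi hg0 hs).bdd_mul
    hτ.aestronglyMeasurable hbd
  exact h1.congr (Eventually.of_forall fun z => mul_comm _ _)

include hgi in
lemma g_shift_int (s : ℝ) : IntegrableOn (fun z => g (z - s)) (Ici s) := by
  have h2 := integrableOn_comp_equiv (MeasurableEquiv.subRight s) (map_subRight s)
    (Ici 0) hgi
  rwa [pre_subRight_Ici] at h2

lemma shift_ae (s : ℝ) {P : ℝ → Prop}
    (h : ∀ᵐ x ∂volume.restrict (Ici (0:ℝ)), P x) :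
    ∀ᵐ z ∂volume.restrict (Ici s), P (z - s) := by
  have h2 := ae_comp_equiv (MeasurableEquiv.subRight s) (map_subRight s) (Ici 0) h
  rwa [pre_subRight_Ici] at h2

include hc hc01 hτ hτ0 hB hB1 hgm hgi hg0 in
lemma vfun_renewal {s : ℝ} (hs : 0 ≤ s) :
    ∫ z in Ici (0:ℝ), vfun c τ g s z * τ z = bfun c τ g s := by
  have hτIci : ∀ᵐ z ∂volume.restrict (Ici s), ‖τ z‖ ≤ B := by
    filter_upwards [ae_restrict_of_ae_restrict_of_subset (Ici_subset_Ici.2 hs) hB] with z hz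
    rwa [Real.norm_of_nonneg (hτ0 _)]
  have hIci_int : IntegrableOn (fun z => vfun c τ g s z * τ z) (Ici s) := by
    have h1 : IntegrableOn (fun z => τ z * g (z - s)) (Ici s) :=
      (g_shift_int hgi s).bdd_mul hτ.aestronglyMeasurable hτIci
    refine h1.congr ?_
    filter_upwards [ae_restrict_mem measurableSet_Ici] with z hz
    show τ z * g (z - s) = vfun c τ g s z * τ z
    simp only [vfun, if_neg (not_lt.2 (mem_Ici.1 hz))]
    rw [mul_comm]
  have hIco_int : IntegrableOn (fun z => vfun c τ g s z * τ z) (Ico 0 s) :=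
    vfun_tau_int_Ico hc hc01 hτ hτ0 hB hB1 hgm hgi hg0 hs
  rw [← Ico_union_Ici_eq_Ici hs,
    setIntegral_union (by simp [Set.disjoint_left]) measurableSet_Ici hIco_int hIci_int]
  have hIci : ∫ z in Ici s, vfun c τ g s z * τ z = Gfun τ g s := by
    have h1 : ∫ z in Ici s, vfun c τ g s z * τ z = ∫ z in Ici s, g (z - s) * τ z :=
      setIntegral_congr_fun measurableSet_Ici (fun z hz => by
        simp only [vfun, if_neg (not_lt.2 (mem_Ici.1 hz))])
    rw [h1, setIntegral_comp_equiv (MeasurableEquiv.addRight s) (map_addRight s) (Ici s)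
      (fun z => g (z - s) * τ z), pre_addRight_Ici, Gfun]
    refine setIntegral_congr_fun measurableSet_Ici (fun y hy => ?_)
    show g (y + s - s) * τ (y + s) = g y * τ (y + s)
    rw [add_sub_cancel_right]
  have hIco : ∫ z in Ico 0 s, vfun c τ g s z * τ z
      = ∫ u in Ioc (0:ℝ) s, c u * bfun c τ g u * τ (s - u) := by
    have h1 : ∫ z in Ico 0 s, vfun c τ g s z * τ z
        = ∫ z in Ico 0 s, (fun x => c x * bfun c τ g x * τ (s - x)) (s - z) :=
      setIntegral_congr_fun measurableSet_Ico (fun z hz => by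
        simp only [vfun, if_pos hz.2, sub_sub_cancel])
    have h2 := setIntegral_comp_equiv (MeasurableEquiv.subLeft s) (map_subLeft s)
      (Ioc 0 s) (fun x => c x * bfun c τ g x * τ (s - x))
    rw [pre_subLeft_Ioc] at h2
    rw [h1]
    exact h2.symm
  rw [hIco, hIci, bfun_volterra hc hc01 hτ hτ0 hB hB1 hgm hgi hg0 hs, add_comm]

include hc hc01 hτ hτ0 hB hB1 hgm hgi hg0 in
lemma vfun_isSol : IsLinearRenewalSolution τ c g (vfun c τ g) := by
  intro t ht
  refine ⟨?_, ?_, ?_, ?_⟩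
  · rw [show Ici (0:ℝ) = Ico 0 t ∪ Ici t from (Ico_union_Ici_eq_Ici ht).symm]
    refine IntegrableOn.union (vfun_int_Ico hc hc01 hτ hτ0 hB hB1 hgm hgi hg0 ht) ?_
    refine (g_shift_int hgi t).congr ?_
    filter_upwards [ae_restrict_mem measurableSet_Ici] with z hz
    show g (z - t) = vfun c τ g t z
    simp only [vfun, if_neg (not_lt.2 (mem_Ici.1 hz))]
  · refine ae_union_split ht ?_ ?_
    · filter_upwards [ae_restrict_mem measurableSet_Ico] with a ha
      simp only [vfun, if_pos ha.2]
      exact mul_nonneg (hc01 _).1 (bfun_nonneg hc01 hτ0 hg0 _)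
    · filter_upwards [ae_restrict_mem measurableSet_Ici, shift_ae t hg0] with a ha h0
      simp only [vfun, if_neg (not_lt.2 (mem_Ici.1 ha))]
      exact h0
  · filter_upwards [ae_restrict_mem measurableSet_Ico] with a ha
    have h0 : (0:ℝ) ≤ t - a := by linarith [ha.2.le]
    rw [vfun_renewal hc hc01 hτ hτ0 hB hB1 hgm hgi hg0 h0]
    simp only [vfun, if_pos ha.2]
  · filter_upwards [ae_restrict_mem measurableSet_Ici] with a ha
    simp only [vfun, if_neg (not_lt.2 (mem_Ici.1 ha))]

end Existence

section Uniqueness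

variable {c τ g : ℝ → ℝ} {B : ℝ}
variable (hc01 : ∀ x, c x ∈ Icc (0:ℝ) 1)
variable (hτ : Measurable τ) (hτ0 : ∀ x, 0 ≤ τ x)
variable (hB : ∀ᵐ a ∂(volume.restrict (Ici (0:ℝ))), τ a ≤ B) (hB1 : 1 ≤ B)

include hc01 hτ hτ0 hB hB1 in
lemma renewal_unique (v v' : ℝ → ℝ → ℝ)
    (hv : IsLinearRenewalSolution τ c g v) (hv' : IsLinearRenewalSolution τ c g v') :
    ∀ t ≥ (0:ℝ), v t =ᵐ[volume.restrict (Ici (0:ℝ))] v' t := by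
  have hB0 : (0:ℝ) < B := by linarith
  set w : ℝ → ℝ := fun u =>
    c u * ((∫ z in Ici (0:ℝ), v u z * τ z) - ∫ z in Ici (0:ℝ), v' u z * τ z) with hw
  have hU1 : ∀ t, 0 ≤ t → ∀ᵐ a ∂volume.restrict (Ico (0:ℝ) t),
      v t a - v' t a = w (t - a) := by
    intro t ht
    filter_upwards [(hv t ht).2.2.1, (hv' t ht).2.2.1] with a h1 h2
    rw [h1, h2, hw]; ring
  have hU2 : ∀ t, 0 ≤ t → ∀ᵐ a ∂volume.restrict (Ici t), v t a - v' t a = 0 := by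
    intro t ht
    filter_upwards [(hv t ht).2.2.2, (hv' t ht).2.2.2] with a h1 h2
    rw [h1, h2, sub_self]
  have hΔint : ∀ t, 0 ≤ t → IntegrableOn (fun a => v t a - v' t a) (Ico 0 t) :=
    fun t ht => IntegrableOn.mono_set ((hv t ht).1.sub (hv' t ht).1) (fun x hx => hx.1)
  have hwrefl_int : ∀ t, 0 ≤ t → IntegrableOn (fun a => w (t - a)) (Ico 0 t) :=
    fun t ht => (hΔint t ht).congr (hU1 t ht)
  have hwint : ∀ t, 0 ≤ t → IntegrableOn w (Ioc 0 t) := by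
    intro t ht
    have h2 := integrableOn_comp_equiv (MeasurableEquiv.subLeft t) (map_subLeft t)
      (Ico 0 t) (hwrefl_int t ht)
    rw [pre_subLeft_Ico] at h2
    refine h2.congr (Eventually.of_forall fun y => ?_)
    show w (t - (t - y)) = w y
    rw [sub_sub_cancel]
  set ψ : ℝ → ℝ := fun r => ∫ u in Ioc (0:ℝ) r, |w u| with hψ
  have hψ0 : ∀ r, 0 ≤ ψ r := fun r => integral_nonneg fun u => abs_nonneg _
  have hrefl : ∀ t, 0 ≤ t → ∫ a in Ico (0:ℝ) t, |v t a - v' t a| = ψ t := by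
    intro t ht
    have h1 : ∫ a in Ico (0:ℝ) t, |v t a - v' t a| = ∫ a in Ico (0:ℝ) t, |w (t - a)| :=
      integral_congr_ae ((hU1 t ht).mono fun a ha => by
        show |v t a - v' t a| = |w (t - a)|
        rw [ha])
    have h2 := setIntegral_comp_equiv (MeasurableEquiv.subLeft t) (map_subLeft t)
      (Ioc 0 t) (fun u => |w u|)
    rw [pre_subLeft_Ioc] at h2
    rw [h1]
    show (∫ a in Ico (0:ℝ) t, |w (t - a)|) = ∫ u in Ioc (0:ℝ) t, |w u|
    exact h2.symm
  have hψmono : ∀ r r', 0 ≤ r → r ≤ r' → ψ r ≤ ψ r' := by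
    intro r r' h0 hrr'
    exact setIntegral_mono_set ((hwint r' (h0.trans hrr')).abs)
      (Eventually.of_forall fun u => abs_nonneg _)
      (HasSubset.Subset.eventuallyLE (Ioc_subset_Ioc_right hrr'))
  have hU4 : ∀ u, 0 ≤ u → |w u| ≤ B * ψ u := by
    intro u hu
    have hbd : ∀ᵐ z ∂volume.restrict (Ici (0:ℝ)), ‖τ z‖ ≤ B := by
      filter_upwards [hB] with z hz; rwa [Real.norm_of_nonneg (hτ0 _)]
    have hint : Integrable (fun z => v u z * τ z) (volume.restrict (Ici 0)) :=
      ((hv u hu).1.bdd_mul hτ.aestronglyMeasurable hbd).congr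
        (Eventually.of_forall fun z => mul_comm _ _)
    have hint' : Integrable (fun z => v' u z * τ z) (volume.restrict (Ici 0)) :=
      ((hv' u hu).1.bdd_mul hτ.aestronglyMeasurable hbd).congr
        (Eventually.of_forall fun z => mul_comm _ _)
    have hΔ0int : Integrable (fun z => v u z - v' u z) (volume.restrict (Ici 0)) :=
      (hv u hu).1.sub (hv' u hu).1
    have hIsub : (∫ z in Ici (0:ℝ), v u z * τ z) - ∫ z in Ici (0:ℝ), v' u z * τ z
        = ∫ z in Ici (0:ℝ), (v u z - v' u z) * τ z := by
      rw [← integral_sub hint hint']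
      exact integral_congr_ae (Eventually.of_forall fun z => by ring)
    have hprod_int : Integrable (fun z => (v u z - v' u z) * τ z)
        (volume.restrict (Ici 0)) :=
      (hint.sub hint').congr (Eventually.of_forall fun z => (sub_mul _ _ _).symm)
    have habs : |∫ z in Ici (0:ℝ), (v u z - v' u z) * τ z|
        ≤ ∫ z in Ici (0:ℝ), |v u z - v' u z| * B := by
      have habs0 := norm_integral_le_integral_norm (μ := volume.restrict (Ici (0:ℝ)))
        (f := fun z => (v u z - v' u z) * τ z)
      simp only [Real.norm_eq_abs] at habs0
      refine habs0.trans ?_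
      refine integral_mono_ae hprod_int.abs (hΔ0int.abs.mul_const B) ?_
      filter_upwards [hB] with z hz
      rw [abs_mul]
      exact mul_le_mul_of_nonneg_left (by rwa [abs_of_nonneg (hτ0 z)]) (abs_nonneg _)
    have hIci_int : IntegrableOn (fun z => |v u z - v' u z|) (Ici u) :=
      (IntegrableOn.mono_set hΔ0int (Ici_subset_Ici.2 hu)).abs
    have hzero : ∫ z in Ici u, |v u z - v' u z| = 0 := by
      refine integral_eq_zero_of_ae ?_
      filter_upwards [hU2 u hu] with a ha
      show |v u a - v' u a| = 0
      rw [ha, abs_zero]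
    have hsplit : ∫ z in Ici (0:ℝ), |v u z - v' u z|
        = (∫ z in Ico (0:ℝ) u, |v u z - v' u z|) + ∫ z in Ici u, |v u z - v' u z| := by
      rw [show Ici (0:ℝ) = Ico 0 u ∪ Ici u from (Ico_union_Ici_eq_Ici hu).symm]
      exact setIntegral_union (by simp [Set.disjoint_left]) measurableSet_Ici
        (hΔint u hu).abs hIci_int
    calc |w u| = c u * |(∫ z in Ici (0:ℝ), v u z * τ z)
          - ∫ z in Ici (0:ℝ), v' u z * τ z| := by
          rw [hw, abs_mul, abs_of_nonneg (hc01 u).1]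
      _ ≤ 1 * |(∫ z in Ici (0:ℝ), v u z * τ z) - ∫ z in Ici (0:ℝ), v' u z * τ z| :=
          mul_le_mul_of_nonneg_right (hc01 u).2 (abs_nonneg _)
      _ = |∫ z in Ici (0:ℝ), (v u z - v' u z) * τ z| := by rw [one_mul, hIsub]
      _ ≤ ∫ z in Ici (0:ℝ), |v u z - v' u z| * B := habs
      _ = B * ∫ z in Ici (0:ℝ), |v u z - v' u z| := by rw [integral_mul_const, mul_comm]
      _ = B * ψ u := by rw [hsplit, hzero, add_zero, hrefl u hu]
  have hadd : ∀ r r', 0 ≤ r → r ≤ r' → ψ r' = ψ r + ∫ u in Ioc r r', |w u| := by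
    intro r r' h0 hrr'
    show ∫ u in Ioc (0:ℝ) r', |w u| = _
    rw [show Ioc (0:ℝ) r' = Ioc 0 r ∪ Ioc r r' from (Ioc_union_Ioc_eq_Ioc h0 hrr').symm]
    exact setIntegral_union (Ioc_disjoint_Ioc_of_le le_rfl) measurableSet_Ioc
      ((hwint r h0).abs) (((hwint r' (h0.trans hrr')).mono_set (Ioc_subset_Ioc_left h0)).abs)
  have hhalf : B * (2*B)⁻¹ = 1/2 := by
    rw [mul_inv, mul_comm (2:ℝ)⁻¹ B⁻¹, ← mul_assoc, mul_inv_cancel₀ hB0.ne', one_mul]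
    norm_num
  have hind : ∀ n : ℕ, ∀ r : ℝ, 0 ≤ r → r ≤ n * (2*B)⁻¹ → ψ r = 0 := by
    intro n
    induction n with
    | zero =>
      intro r h0 hle
      simp only [Nat.cast_zero, zero_mul] at hle
      have hr : r = 0 := le_antisymm hle h0
      rw [hψ, hr]
      simp
    | succ n IH =>
      intro r h0 hle
      set r₀ := min r ((n : ℝ) * (2*B)⁻¹) with hr₀
      have h00 : 0 ≤ r₀ := le_min h0 (by positivity)
      have hψr₀ : ψ r₀ = 0 := IH r₀ h00 (min_le_right _ _)
      have hr₀r : r₀ ≤ r := min_le_left _ _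
      have hstep : r - r₀ ≤ (2*B)⁻¹ := by
        rcases le_total r ((n : ℝ) * (2*B)⁻¹) with h | h
        · rw [hr₀, min_eq_left h]
          simp only [sub_self]
          positivity
        · rw [hr₀, min_eq_right h]
          push_cast at hle ⊢
          linarith
      have hbound : ∫ u in Ioc r₀ r, |w u| ≤ B * ψ r * (r - r₀) := by
        have hint1 : IntegrableOn (fun u => |w u|) (Ioc r₀ r) :=
          ((hwint r h0).mono_set (Ioc_subset_Ioc_left h00)).abs
        have hconst : IntegrableOn (fun _ : ℝ => B * ψ r) (Ioc r₀ r) :=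
          integrableOn_const measure_Ioc_lt_top.ne
        have hmono := setIntegral_mono_on hint1 hconst measurableSet_Ioc
          (fun u hu => (hU4 u (h00.trans hu.1.le)).trans
            (mul_le_mul_of_nonneg_left (hψmono u r (h00.trans hu.1.le) hu.2) hB0.le))
        refine hmono.trans (le_of_eq ?_)
        rw [setIntegral_const, Real.volume_real_Ioc_of_le hr₀r,
          smul_eq_mul]
        ring
      have he : ψ r = ∫ u in Ioc r₀ r, |w u| := by
        rw [hadd r₀ r h00 hr₀r, hψr₀, zero_add]
      have h1 : ψ r ≤ B * ψ r * (r - r₀) := he.le.trans hbound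
      have h2 : B * (r - r₀) ≤ 1/2 := by
        calc B * (r - r₀) ≤ B * (2*B)⁻¹ := by gcongr
          _ = 1/2 := hhalf
      nlinarith [hψ0 r]
  have hψzero : ∀ t, 0 ≤ t → ψ t = 0 := by
    intro t ht
    obtain ⟨n, hn⟩ := exists_nat_ge (t * (2*B))
    refine hind n t ht ?_
    have h2B : (0:ℝ) < 2*B := by linarith
    calc t = t * (2*B) * (2*B)⁻¹ := by field_simp
      _ ≤ n * (2*B)⁻¹ := by gcongr
  intro t ht
  have hzero : ∫ a in Ico (0:ℝ) t, |v t a - v' t a| = 0 := by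
    rw [hrefl t ht, hψzero t ht]
  have hae : ∀ᵐ a ∂volume.restrict (Ico (0:ℝ) t), |v t a - v' t a| = 0 := by
    have hint : Integrable (fun a => |v t a - v' t a|)
        (volume.restrict (Ico 0 t)) := (hΔint t ht).abs
    have h3 := (integral_eq_zero_iff_of_nonneg (fun a => abs_nonneg _) hint).mp hzero
    filter_upwards [h3] with a ha
    simpa using ha
  refine ae_union_split ht ?_ ?_
  · filter_upwards [hae] with a ha
    exact sub_eq_zero.mp (abs_eq_zero.mp ha)
  · filter_upwards [hU2 t ht] with a ha
    exact sub_eq_zero.mp ha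

end Uniqueness


/-- Well-posedness of the linear, time-inhomogeneous renewal equation:
if `c : [0,∞) → [0,1]` is measurable, `τ : [0,∞) → [0,∞)` is measurable and essentially
bounded, and `g ∈ L¹([0,∞))` is nonnegative, then there exists a family `(v_t)_{t ≥ 0}`
of nonnegative `L¹` functions solving the equation, and it is unique up to a.e. equality
for every `t ≥ 0`. -/
theorem exists_unique_linear_renewal_solution
    (c : ℝ → ℝ) (hcmeas : Measurable c) (hc01 : ∀ t, c t ∈ Icc (0 : ℝ) 1)
    (τ : ℝ → ℝ) (hτmeas : Measurable τ) (hτnonneg : ∀ a, 0 ≤ τ a)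
    (hτbdd : ∃ B : ℝ, ∀ᵐ a ∂(volume.restrict (Ici (0 : ℝ))), τ a ≤ B)
    (g : ℝ → ℝ) (hg : Integrable g (volume.restrict (Ici 0)))
    (hgnonneg : ∀ᵐ a ∂(volume.restrict (Ici (0 : ℝ))), 0 ≤ g a) :
    (∃ v : ℝ → ℝ → ℝ, IsLinearRenewalSolution τ c g v) ∧
      ∀ v v' : ℝ → ℝ → ℝ, IsLinearRenewalSolution τ c g v →
        IsLinearRenewalSolution τ c g v' →
        ∀ t ≥ (0 : ℝ), v t =ᵐ[volume.restrict (Ici (0 : ℝ))] v' t := by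
  obtain ⟨B₀, hB₀⟩ := hτbdd
  set B := max B₀ 1 with hBdef
  have hB : ∀ᵐ a ∂(volume.restrict (Ici (0:ℝ))), τ a ≤ B :=
    hB₀.mono fun a ha => ha.trans (le_max_left _ _)
  have hB1 : 1 ≤ B := le_max_right _ _
  obtain ⟨g₁, hg₁sm, hgg₁⟩ : ∃ g₁, StronglyMeasurable g₁ ∧
      g =ᵐ[volume.restrict (Ici (0:ℝ))] g₁ :=
    ⟨hg.1.mk g, hg.1.stronglyMeasurable_mk, hg.1.ae_eq_mk⟩
  have hg₁m : Measurable g₁ := hg₁sm.measurable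
  have hg₁i : Integrable g₁ (volume.restrict (Ici 0)) := hg.congr hgg₁
  have hg₁0 : ∀ᵐ a ∂(volume.restrict (Ici (0:ℝ))), 0 ≤ g₁ a := by
    filter_upwards [hgnonneg, hgg₁] with a h1 h2
    rwa [← h2]
  have hsol := vfun_isSol hcmeas hc01 hτmeas hτnonneg hB hB1 hg₁m hg₁i hg₁0
  constructor
  · refine ⟨vfun c τ g₁, ?_⟩
    intro t ht
    obtain ⟨h1, h2, h3, h4⟩ := hsol t ht
    refine ⟨h1, h2, h3, ?_⟩
    filter_upwards [h4, shift_ae t hgg₁] with a ha hgg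
    rw [ha]
    exact hgg.symm
  · exact fun v v' hv hv' => renewal_unique hc01 hτmeas hτnonneg hB hB1 v v' hv hv'
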